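/- Let A ∈ G(d,k) with adapted orthonormal basis a₁,…,a_d (A = Lin{a₁,…,a_k}), and let ξ_i ∈ T_i A and ξ_j ∈ T_j A be elements of the standard orthonormal bases ⋀_{l∈I} a_l of T_i A and ⋀_{l∈J} a_l of T_j A with I ≠ J. Then ∫_{G₀(d,k)} ⟨A,V⟩² ⟨V,ξ_i⟩ ⟨V,ξ_j⟩ dν̄(V) = 0, where ν̄ is the invariant probability measure on the oriented Grassmannian G₀(d,k). -/

import Mathlib

open scoped RealInnerProductSpace
open MeasureTheory

/-- The space `⋀_k ℝ^d` of `k`-vectors, in coordinates over `k`-subsets of `{1,…,d}`. -/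
abbrev ExtPow (d k : ℕ) := EuclideanSpace ℝ {s : Finset (Fin d) // s.card = k}

/-- The simple `k`-vector `u₁ ∧ … ∧ u_k` in the coordinate model. -/
noncomputable def simpleWedge {d k : ℕ} (u : Fin k → EuclideanSpace ℝ (Fin d)) :
    ExtPow d k :=
  WithLp.toLp 2 fun s : {s : Finset (Fin d) // s.card = k} =>
    Matrix.det (Matrix.of fun i j : Fin k => u i (s.1.orderIsoOfFin s.2 j))

/-- Orthonormal `k`-frames in `ℝ^d`; `u ↦ simpleWedge u` maps an invariant probability
measure on frames onto the invariant probability measure `ν̄` of the oriented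
Grassmannian `G₀(d,k)` of unit simple `k`-vectors. -/
abbrev Stiefel (d k : ℕ) := {u : Fin k → EuclideanSpace ℝ (Fin d) // Orthonormal ℝ u}

/-- Cauchy–Binet formula. -/
theorem cauchyBinet_aux {k d : ℕ} (V U : Matrix (Fin k) (Fin d) ℝ) :
    (V * U.transpose).det
      = ∑ s : {s : Finset (Fin d) // s.card = k},
          (V.submatrix id (fun j => (s.1.orderIsoOfFin s.2 j : Fin d))).det *
          (U.submatrix id (fun j => (s.1.orderIsoOfFin s.2 j : Fin d))).det := by
  classical
  have step1 : (V * U.transpose).det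
      = ∑ φ : Fin k → Fin d, (∏ i, U i (φ i)) * (V.submatrix id φ).det := by
    rw [Matrix.det_apply']
    have h1 : ∀ σ : Equiv.Perm (Fin k),
        (∏ i, (V * U.transpose) (σ i) i)
          = ∑ φ : Fin k → Fin d, ∏ i, (V (σ i) (φ i) * U i (φ i)) := by
      intro σ
      have : ∀ i, (V * U.transpose) (σ i) i = ∑ c, V (σ i) c * U i c := by
        intro i; simp [Matrix.mul_apply, Matrix.transpose_apply]
      simp_rw [this]
      rw [Finset.prod_univ_sum]
      simp [Fintype.piFinset_univ]
    simp_rw [h1, Finset.mul_sum]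
    rw [Finset.sum_comm]
    congr 1
    ext φ
    rw [Matrix.det_apply', Finset.mul_sum]
    congr 1
    ext σ
    rw [Finset.prod_mul_distrib]
    simp [Matrix.submatrix_apply]
    ring
  rw [step1]
  set F : (Fin k → Fin d) → ℝ := fun φ => (∏ i, U i (φ i)) * (V.submatrix id φ).det with hF
  have hzero : ∀ φ : Fin k → Fin d, ¬ Function.Injective φ → F φ = 0 := by
    intro φ hφ
    rw [Function.not_injective_iff] at hφ
    obtain ⟨i1, i2, he, hne⟩ := hφ
    have : (V.submatrix id φ).det = 0 :=
      Matrix.det_zero_of_column_eq hne (fun r => by simp [Matrix.submatrix_apply, he])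
    simp [hF, this]
  have hfilter : ∑ φ : Fin k → Fin d, F φ
      = ∑ φ ∈ Finset.univ.filter (fun φ : Fin k → Fin d => Function.Injective φ), F φ := by
    rw [Finset.sum_filter_of_ne]
    intro φ _ hFφ
    by_contra h
    exact hFφ (hzero φ h)
  rw [hfilter]
  have hbijsum : ∑ φ ∈ Finset.univ.filter (fun φ : Fin k → Fin d => Function.Injective φ), F φ
      = ∑ p : {s : Finset (Fin d) // s.card = k} × Equiv.Perm (Fin k),
          F (fun t => (p.1.1.orderIsoOfFin p.1.2 (p.2 t) : Fin d)) := by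
    rw [eq_comm]
    apply Finset.sum_bij (fun (p : {s : Finset (Fin d) // s.card = k} × Equiv.Perm (Fin k)) _ =>
      (fun t => (p.1.1.orderIsoOfFin p.1.2 (p.2 t) : Fin d)))
    · intro p _
      simp only [Finset.mem_filter, Finset.mem_univ, true_and]
      intro x y hxy
      exact p.2.injective ((p.1.1.orderIsoOfFin p.1.2).injective (Subtype.coe_injective hxy))
    · intro p _ q _ hpq
      have hrange : p.1 = q.1 := by
        apply Subtype.ext
        apply Finset.ext
        intro x
        constructor
        · intro hx
          obtain ⟨t, ht⟩ := (p.1.1.orderIsoOfFin p.1.2).surjective ⟨x, hx⟩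
          have h2 := congrFun hpq (p.2.symm t)
          simp only [Equiv.apply_symm_apply] at h2
          rw [ht] at h2
          have h3 : x = ((q.1.1.orderIsoOfFin q.1.2 (q.2 (p.2.symm t))) : Fin d) := h2
          rw [h3]
          exact Finset.coe_mem _
        · intro hx
          obtain ⟨t, ht⟩ := (q.1.1.orderIsoOfFin q.1.2).surjective ⟨x, hx⟩
          have h2 := (congrFun hpq (q.2.symm t)).symm
          simp only [Equiv.apply_symm_apply] at h2
          rw [ht] at h2
          have h3 : x = ((p.1.1.orderIsoOfFin p.1.2 (p.2 (q.2.symm t))) : Fin d) := h2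
          rw [h3]
          exact Finset.coe_mem _
      obtain ⟨s, σ⟩ := p
      obtain ⟨s', σ'⟩ := q
      simp only at hrange
      subst hrange
      simp only [Prod.mk.injEq, true_and]
      apply Equiv.ext
      intro t
      exact (s.1.orderIsoOfFin s.2).injective (Subtype.coe_injective (congrFun hpq t))
    · intro φ hφ
      simp only [Finset.mem_filter, Finset.mem_univ, true_and] at hφ
      have hcard : (Finset.univ.image φ).card = k := by
        rw [Finset.card_image_of_injective _ hφ, Finset.card_univ, Fintype.card_fin]
      have hmem : ∀ t, φ t ∈ Finset.univ.image φ :=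
        fun t => Finset.mem_image_of_mem φ (Finset.mem_univ t)
      set e := (Finset.univ.image φ).orderIsoOfFin hcard with he
      have hinj0 : Function.Injective (fun t => e.symm ⟨φ t, hmem t⟩) := by
        intro x y hxy
        apply hφ
        have := e.symm.injective hxy
        exact congrArg Subtype.val this
      have hbij := (Finite.injective_iff_bijective).mp hinj0
      refine ⟨⟨⟨Finset.univ.image φ, hcard⟩, Equiv.ofBijective _ hbij⟩, Finset.mem_univ _, ?_⟩
      funext t
      exact congrArg Subtype.val (e.apply_symm_apply ⟨φ t, hmem t⟩)
    · intro p _; rfl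
  rw [hbijsum, Fintype.sum_prod_type]
  congr 1
  ext s
  set A := (V.submatrix id (fun j => (s.1.orderIsoOfFin s.2 j : Fin d))).det with hA
  set M := (U.submatrix id (fun j => (s.1.orderIsoOfFin s.2 j : Fin d))).transpose with hM
  have key : ∀ σ : Equiv.Perm (Fin k),
      F (fun t => (s.1.orderIsoOfFin s.2 (σ t) : Fin d))
        = (Equiv.Perm.sign σ : ℝ) * (A * ∏ i, M (σ i) i) := by
    intro σ
    simp only [hF]
    have h1 : (V.submatrix id (fun t => (s.1.orderIsoOfFin s.2 (σ t) : Fin d)))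
        = (V.submatrix id (fun j => (s.1.orderIsoOfFin s.2 j : Fin d))).submatrix id σ := by
      ext i t; simp [Matrix.submatrix_apply]
    rw [h1, Matrix.det_permute']
    simp only [hM, Matrix.transpose_apply, Matrix.submatrix_apply, id_eq, hA]
    ring
  simp_rw [key]
  have hsum : ∑ σ : Equiv.Perm (Fin k), (Equiv.Perm.sign σ : ℝ) * (A * ∏ i, M (σ i) i)
      = A * ∑ σ : Equiv.Perm (Fin k), (Equiv.Perm.sign σ : ℝ) * ∏ i, M (σ i) i := by
    rw [Finset.mul_sum]; exact Finset.sum_congr rfl fun σ _ => by ring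
  rw [hsum, ← Matrix.det_apply', hM, Matrix.det_transpose]

/-- Gram-determinant formula for inner products of simple wedges. -/
theorem inner_simpleWedge {d k : ℕ} (v u : Fin k → EuclideanSpace ℝ (Fin d)) :
    ⟪simpleWedge v, simpleWedge u⟫
      = (Matrix.of fun i t : Fin k => ⟪v i, u t⟫).det := by
  classical
  have hVU : (Matrix.of fun i t : Fin k => ⟪v i, u t⟫)
      = (Matrix.of fun i c => v i c) * (Matrix.of fun t c => u t c).transpose := by
    ext i t
    simp [Matrix.mul_apply, PiLp.inner_apply, RCLike.inner_apply, conj_trivial,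
      Matrix.transpose_apply]
    exact Finset.sum_congr rfl fun _ _ => mul_comm _ _
  rw [hVU, cauchyBinet_aux]
  rw [PiLp.inner_apply]
  apply Finset.sum_congr rfl
  intro s _
  simp only [RCLike.inner_apply, conj_trivial]
  rw [mul_comm]; rfl

/-- Claim 1: let `a₁,…,a_d` be an orthonormal basis adapted to `A = Lin{a₁,…,a_k}`, and
let `ξ_I = ⋀_{l∈I} a_l ∈ T_i A`, `ξ_J = ⋀_{l∈J} a_l ∈ T_j A` be members of the standard
orthonormal bases of `T_i A`, `T_j A` (so `|I| = |J| = k`, `|I ∩ {1,…,k}| = k−i`,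
`|J ∩ {1,…,k}| = k−j`) with `I ≠ J`.  Then
`∫_{G₀(d,k)} ⟨A,V⟩² ⟨V,ξ_I⟩ ⟨V,ξ_J⟩ dν̄(V) = 0`. -/
theorem integral_inner_sq_mul_inner_basis_eq_zero (d k i j : ℕ) (hk : k ≤ d)
    (μ : Measure (Stiefel d k)) (hμ : IsProbabilityMeasure μ)
    (hinv : ∀ ρ : EuclideanSpace ℝ (Fin d) ≃ₗᵢ[ℝ] EuclideanSpace ℝ (Fin d),
      ∀ f : Stiefel d k → Stiefel d k,
        (∀ u t, (f u).1 t = ρ (u.1 t)) → Measure.map f μ = μ)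
    (a : Fin d → EuclideanSpace ℝ (Fin d)) (ha : Orthonormal ℝ a)
    (I J : Finset (Fin d)) (hI : I.card = k) (hJ : J.card = k)
    (hIi : (I ∩ Finset.filter (fun t : Fin d => (t : ℕ) < k) Finset.univ).card = k - i)
    (hJj : (J ∩ Finset.filter (fun t : Fin d => (t : ℕ) < k) Finset.univ).card = k - j)
    (hIJ : I ≠ J) :
    ∫ u : Stiefel d k,
        ⟪simpleWedge (fun t : Fin k => a (Fin.castLE hk t)), simpleWedge u.1⟫ ^ 2 *
          (⟪simpleWedge u.1, simpleWedge (fun t => a (I.orderIsoOfFin hI t))⟫ *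
           ⟪simpleWedge u.1, simpleWedge (fun t => a (J.orderIsoOfFin hJ t))⟫) ∂μ = 0 := by
  classical
  -- pick l ∈ I \ J
  have hne : (I \ J).Nonempty := by
    rw [Finset.sdiff_nonempty]
    intro hsub
    exact hIJ (Finset.eq_of_subset_of_card_le hsub (le_of_eq (hJ.trans hI.symm)))
  obtain ⟨l, hl⟩ := hne
  have hlI : l ∈ I := (Finset.mem_sdiff.mp hl).1
  have hlJ : l ∉ J := (Finset.mem_sdiff.mp hl).2
  -- the reflection negating a l
  set K : Submodule ℝ (EuclideanSpace ℝ (Fin d)) := (ℝ ∙ a l)ᗮ with hK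
  set ρ : EuclideanSpace ℝ (Fin d) ≃ₗᵢ[ℝ] EuclideanSpace ℝ (Fin d) := Submodule.reflection K with hρ
  have hfix : ∀ m : Fin d, m ≠ l → ρ (a m) = a m := by
    intro m hm
    apply Submodule.reflection_mem_subspace_eq_self
    rw [hK, Submodule.mem_orthogonal_singleton_iff_inner_right]
    exact ha.2 (Ne.symm hm)
  have hneg : ρ (a l) = - a l := by
    apply Submodule.reflection_mem_subspace_orthogonalComplement_eq_neg
    exact Submodule.le_orthogonal_orthogonal _ (Submodule.mem_span_singleton_self _)
  have hadj : ∀ x y : EuclideanSpace ℝ (Fin d), ⟪ρ x, y⟫ = ⟪x, ρ y⟫ := by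
    intro x y
    conv_lhs => rw [← Submodule.reflection_reflection K y]
    exact ρ.inner_map_map x (Submodule.reflection K y)
  -- key sign identity
  have keyC : ∀ (u : Fin k → EuclideanSpace ℝ (Fin d)) (c : Fin k → Fin d),
      ⟪simpleWedge (fun t => ρ (u t)), simpleWedge (fun t => a (c t))⟫
        = (∏ t, (if c t = l then (-1:ℝ) else 1))
            * ⟪simpleWedge u, simpleWedge (fun t => a (c t))⟫ := by
    intro u c
    rw [inner_simpleWedge, inner_simpleWedge]
    have hM : (Matrix.of fun p t : Fin k => ⟪ρ (u p), a (c t)⟫)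
        = (Matrix.of fun p t : Fin k => ⟪u p, a (c t)⟫)
            * Matrix.diagonal (fun t => if c t = l then (-1:ℝ) else 1) := by
      ext p t
      rw [Matrix.mul_diagonal]
      simp only [Matrix.of_apply]
      rw [hadj]
      by_cases h : c t = l
      · rw [h, hneg, inner_neg_right]; simp [h]
      · rw [hfix _ h]; simp [h]
    rw [hM, Matrix.det_mul, Matrix.det_diagonal, mul_comm]
  -- sign computations
  have hsignI : (∏ t : Fin k, (if ((I.orderIsoOfFin hI t : Fin d)) = l then (-1:ℝ) else 1))
      = -1 := by
    rw [Finset.prod_eq_single ((I.orderIsoOfFin hI).symm ⟨l, hlI⟩)]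
    · simp
    · intro b _ hb
      rw [if_neg]
      intro hbl
      apply hb
      have h2 : I.orderIsoOfFin hI b = ⟨l, hlI⟩ := Subtype.ext hbl
      rw [← h2, OrderIso.symm_apply_apply]
    · intro h; exact absurd (Finset.mem_univ _) h
  have hsignJ : (∏ t : Fin k, (if ((J.orderIsoOfFin hJ t : Fin d)) = l then (-1:ℝ) else 1))
      = 1 := by
    apply Finset.prod_eq_one
    intro t _
    rw [if_neg]
    intro h
    exact hlJ (h ▸ Finset.coe_mem (J.orderIsoOfFin hJ t))
  have hsqK : (∏ t : Fin k, (if (Fin.castLE hk t : Fin d) = l then (-1:ℝ) else 1))^2 = 1 := by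
    rw [← Finset.prod_pow]
    apply Finset.prod_eq_one
    intro t _
    split_ifs <;> norm_num
  -- the frame map
  have honρ : ∀ (u : Fin k → EuclideanSpace ℝ (Fin d)), Orthonormal ℝ u →
      Orthonormal ℝ (fun t => ρ (u t)) := by
    intro u hu
    rw [orthonormal_iff_ite] at hu ⊢
    intro p q
    rw [LinearIsometryEquiv.inner_map_map]
    exact hu p q
  set f : Stiefel d k → Stiefel d k := fun u => ⟨fun t => ρ (u.1 t), honρ u.1 u.2⟩ with hf
  have hmap : Measure.map f μ = μ := hinv ρ f (fun u t => rfl)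
  have hfm : Measurable f := by
    apply Measurable.subtype_mk
    apply measurable_pi_lambda
    intro t
    exact ρ.continuous.measurable.comp ((measurable_pi_apply t).comp measurable_subtype_coe)
  -- the integrand
  set G : (Fin k → EuclideanSpace ℝ (Fin d)) → ℝ := fun x =>
    ⟪simpleWedge (fun t : Fin k => a (Fin.castLE hk t)), simpleWedge x⟫ ^ 2 *
      (⟪simpleWedge x, simpleWedge (fun t => a (I.orderIsoOfFin hI t))⟫ *
       ⟪simpleWedge x, simpleWedge (fun t => a (J.orderIsoOfFin hJ t))⟫) with hG
  have happ : ∀ t : Fin k, Continuous fun x : Fin k → EuclideanSpace ℝ (Fin d) => x t :=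
    fun t => continuous_apply t
  have hcl : ∀ v : Fin k → EuclideanSpace ℝ (Fin d),
      Continuous fun x : Fin k → EuclideanSpace ℝ (Fin d)
        => ⟪simpleWedge v, simpleWedge x⟫ := by
    intro v
    simp only [inner_simpleWedge]
    apply Continuous.matrix_det
    apply continuous_matrix
    intro p t
    exact continuous_const.inner (happ t)
  have hcr : ∀ v : Fin k → EuclideanSpace ℝ (Fin d),
      Continuous fun x : Fin k → EuclideanSpace ℝ (Fin d)
        => ⟪simpleWedge x, simpleWedge v⟫ := by
    intro v
    simp only [inner_simpleWedge]
    apply Continuous.matrix_det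
    apply continuous_matrix
    intro p t
    exact (happ p).inner continuous_const
  have hGcont : Continuous G := by
    rw [hG]
    exact ((hcl _).pow 2).mul ((hcr _).mul (hcr _))
  have hgm : AEStronglyMeasurable (fun u : Stiefel d k => G u.1) μ :=
    (hGcont.measurable.comp measurable_subtype_coe).aestronglyMeasurable
  -- pointwise sign flip
  have h2 : ∀ u : Stiefel d k, G ((f u).1) = - G u.1 := by
    intro u
    have hfu : (f u).1 = fun t => ρ (u.1 t) := rfl
    rw [hfu, hG]
    simp only
    have e1 : ⟪simpleWedge (fun t : Fin k => a (Fin.castLE hk t)),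
        simpleWedge (fun t => ρ (u.1 t))⟫
        = (∏ t : Fin k, (if (Fin.castLE hk t : Fin d) = l then (-1:ℝ) else 1))
          * ⟪simpleWedge (fun t : Fin k => a (Fin.castLE hk t)), simpleWedge u.1⟫ := by
      rw [real_inner_comm, keyC u.1 (fun t => Fin.castLE hk t),
        real_inner_comm (simpleWedge u.1)]
    have e2 : ⟪simpleWedge (fun t => ρ (u.1 t)),
        simpleWedge (fun t => a (I.orderIsoOfFin hI t))⟫
        = -1 * ⟪simpleWedge u.1, simpleWedge (fun t => a (I.orderIsoOfFin hI t))⟫ := by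
      rw [keyC u.1 (fun t => (I.orderIsoOfFin hI t : Fin d)), hsignI]
    have e3 : ⟪simpleWedge (fun t => ρ (u.1 t)),
        simpleWedge (fun t => a (J.orderIsoOfFin hJ t))⟫
        = ⟪simpleWedge u.1, simpleWedge (fun t => a (J.orderIsoOfFin hJ t))⟫ := by
      rw [keyC u.1 (fun t => (J.orderIsoOfFin hJ t : Fin d)), hsignJ, one_mul]
    rw [e1, e2, e3, mul_pow, hsqK]
    ring
  -- conclude
  have hgoal : ∫ u : Stiefel d k, G u.1 ∂μ = 0 := by
    have h1 : ∫ u, G u.1 ∂(Measure.map f μ) = ∫ u, G ((f u).1) ∂μ :=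
      integral_map hfm.aemeasurable (by rw [hmap]; exact hgm)
    have h3 : ∫ u, G u.1 ∂μ = - ∫ u, G u.1 ∂μ := by
      conv_lhs => rw [← hmap]
      rw [h1]
      simp_rw [h2]
      rw [integral_neg]
    linarith
  exact hgoal
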